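/- Chaoticity of powers: Let X be a (real or complex) infinite-dimensional separable Banach space and let A be a densely defined linear operator in X such that every power A^n (n ∈ ℕ) is a closed operator, and suppose there exist a set Y ⊆ C^∞(A) dense in X and a mapping B : Y → Y such that (1) ABf = f for every f ∈ Y and (2) for every f ∈ Y there exist α = α(f) ∈ (0,1) and c = c(f,α) > 0 with max(‖A^n f‖, ‖B^n f‖) ≤ c·α^n for all n ∈ ℕ. Then for every n ∈ ℕ the power A^n is chaotic. -/

import Mathlib

open Filter Topology TopologicalSpace

/-- The domain of the `n`-th power of the operator `A` with domain `D`: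
`x ∈ D(Aⁿ)` iff `Aᵏx ∈ D(A)` for all `k < n`. -/
def opDom {X : Type*} (A : X → X) (D : Set X) (n : ℕ) : Set X :=
  {x | ∀ k < n, A^[k] x ∈ D}

/-- `C^∞(A) = ⋂ₙ D(Aⁿ)`. -/
def opCinf {X : Type*} (A : X → X) (D : Set X) : Set X :=
  {x | ∀ k : ℕ, A^[k] x ∈ D}

/-- `A` is linear on the subspace `D`. -/
def IsLinearOn (𝕜 : Type*) {X : Type*} [RCLike 𝕜] [NormedAddCommGroup X]
    [NormedSpace 𝕜 X] (A : X → X) (D : Set X) : Prop :=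
  (∀ x ∈ D, ∀ y ∈ D, A (x + y) = A x + A y) ∧
  (∀ (c : 𝕜), ∀ x ∈ D, A (c • x) = c • A x)

/-- The `n`-th power of `A` (with domain `D`) is a closed operator:
its graph is closed in `X × X`. -/
def ClosedPower {X : Type*} [NormedAddCommGroup X] (A : X → X) (D : Set X)
    (n : ℕ) : Prop :=
  IsClosed {p : X × X | p.1 ∈ opDom A D n ∧ p.2 = A^[n] p.1}

/-- A hypercyclic vector for `A`: a nonzero `f ∈ C^∞(A)` with dense orbit. -/
def HypercyclicVec {X : Type*} [NormedAddCommGroup X] (A : X → X) (D : Set X)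
    (f : X) : Prop :=
  f ∈ opCinf A D ∧ f ≠ 0 ∧ Dense (Set.range fun n : ℕ => A^[n] f)

/-- `A` (with domain `D`) is hypercyclic. -/
def HypercyclicOp {X : Type*} [NormedAddCommGroup X] (A : X → X) (D : Set X) :
    Prop :=
  ∃ f, HypercyclicVec A D f

/-- `f` is a periodic point of `A`: `f ∈ D(A^N)` and `A^N f = f` for some `N ≥ 1`. -/
def PeriodicPt {X : Type*} (A : X → X) (D : Set X) (f : X) : Prop :=
  ∃ N : ℕ, 0 < N ∧ f ∈ opDom A D N ∧ A^[N] f = f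

/-- `A` (with domain `D`) is chaotic: hypercyclic with a dense set of periodic
points. -/
def ChaoticOp {X : Type*} [NormedAddCommGroup X] (A : X → X) (D : Set X) : Prop :=
  HypercyclicOp A D ∧ Dense {f | PeriodicPt A D f}

set_option linter.unusedSectionVars false
set_option linter.unusedVariables false
section Aux
variable {𝕜 X : Type*} [RCLike 𝕜] [NormedAddCommGroup X] [NormedSpace 𝕜 X]
  {D : Submodule 𝕜 X} {A : X → X}

lemma A_zero (hlin : IsLinearOn 𝕜 A (D : Set X)) : A 0 = 0 := by
  have := hlin.2 0 0 D.zero_mem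
  simpa using this

lemma A_iter_zero (hlin : IsLinearOn 𝕜 A (D : Set X)) (m : ℕ) : A^[m] (0 : X) = 0 := by
  induction m with
  | zero => rfl
  | succ k ih => rw [Function.iterate_succ_apply', ih, A_zero hlin]

lemma opCinf_subset_opDom (m : ℕ) : opCinf A (D : Set X) ⊆ opDom A (D : Set X) m :=
  fun _ hx k _ => hx k

lemma iter_add (hlin : IsLinearOn 𝕜 A (D : Set X)) (m : ℕ) {x y : X}
    (hx : x ∈ opDom A (D : Set X) m) (hy : y ∈ opDom A (D : Set X) m) :
    ∀ k ≤ m, A^[k] (x + y) = A^[k] x + A^[k] y := by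
  intro k hk
  induction k with
  | zero => rfl
  | succ j ih =>
    have hj : j < m := hk
    rw [Function.iterate_succ_apply', Function.iterate_succ_apply',
      Function.iterate_succ_apply', ih (le_of_lt hj),
      hlin.1 _ (hx j hj) _ (hy j hj)]

lemma opDom_add (hlin : IsLinearOn 𝕜 A (D : Set X)) (m : ℕ) {x y : X}
    (hx : x ∈ opDom A (D : Set X) m) (hy : y ∈ opDom A (D : Set X) m) :
    x + y ∈ opDom A (D : Set X) m := by
  intro k hk
  rw [iter_add hlin m hx hy k (le_of_lt hk)]
  exact D.add_mem (hx k hk) (hy k hk)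

lemma opDom_zero_mem (hlin : IsLinearOn 𝕜 A (D : Set X)) (m : ℕ) :
    (0 : X) ∈ opDom A (D : Set X) m := by
  intro k _
  rw [A_iter_zero hlin]
  exact D.zero_mem

lemma opDom_sum (hlin : IsLinearOn 𝕜 A (D : Set X)) (m : ℕ) (u : ℕ → X)
    (hu : ∀ k, u k ∈ opDom A (D : Set X) m) (K : ℕ) :
    (∑ i ∈ Finset.range K, u i) ∈ opDom A (D : Set X) m ∧
      A^[m] (∑ i ∈ Finset.range K, u i) = ∑ i ∈ Finset.range K, A^[m] (u i) := by
  induction K with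
  | zero => simpa using ⟨opDom_zero_mem hlin m, A_iter_zero hlin m⟩
  | succ K ih =>
    rw [Finset.sum_range_succ, Finset.sum_range_succ]
    exact ⟨opDom_add hlin m ih.1 (hu K),
      by rw [iter_add hlin m ih.1 (hu K) m le_rfl, ih.2]⟩

/-- Key closedness lemma: `A^m` passes through convergent sums. -/
lemma opDom_tsum (hlin : IsLinearOn 𝕜 A (D : Set X)) [CompleteSpace X] {m : ℕ}
    (hcl : ClosedPower A (D : Set X) m) (u : ℕ → X)
    (hu : ∀ k, u k ∈ opDom A (D : Set X) m)
    (hs : Summable u) (hs' : Summable (fun k => A^[m] (u k))) :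
    (∑' k, u k) ∈ opDom A (D : Set X) m ∧
      A^[m] (∑' k, u k) = ∑' k, A^[m] (u k) := by
  have h1 : Tendsto (fun K => ∑ i ∈ Finset.range K, u i) atTop (𝓝 (∑' k, u k)) :=
    hs.hasSum.tendsto_sum_nat
  have h2 : Tendsto (fun K => ∑ i ∈ Finset.range K, A^[m] (u i)) atTop
      (𝓝 (∑' k, A^[m] (u k))) := hs'.hasSum.tendsto_sum_nat
  have key : (∑' k, u k, ∑' k, A^[m] (u k)) ∈
      {p : X × X | p.1 ∈ opDom A (D : Set X) m ∧ p.2 = A^[m] p.1} := by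
    apply hcl.mem_of_tendsto ((h1.prodMk_nhds h2))
    filter_upwards with K
    exact ⟨(opDom_sum hlin m u hu K).1, ((opDom_sum hlin m u hu K).2).symm⟩
  exact ⟨key.1, key.2.symm⟩

end Aux

section BY
variable {𝕜 X : Type*} [RCLike 𝕜] [NormedAddCommGroup X] [NormedSpace 𝕜 X]
  {D : Submodule 𝕜 X} {A B : X → X} {Y : Set X}

lemma B_iter_mem (hBmaps : Set.MapsTo B Y Y) (m : ℕ) {f : X} (hf : f ∈ Y) :
    B^[m] f ∈ Y := hBmaps.iterate m hf

lemma AB_pow (hBmaps : Set.MapsTo B Y Y) (h1 : ∀ f ∈ Y, A (B f) = f)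
    (m : ℕ) {f : X} (hf : f ∈ Y) : A^[m] (B^[m] f) = f := by
  induction m with
  | zero => rfl
  | succ k ih =>
    rw [Function.iterate_succ_apply A, Function.iterate_succ_apply' B,
      h1 _ (B_iter_mem hBmaps k hf), ih]

lemma AB_le (hBmaps : Set.MapsTo B Y Y) (h1 : ∀ f ∈ Y, A (B f) = f)
    {m j : ℕ} (h : m ≤ j) {f : X} (hf : f ∈ Y) :
    A^[m] (B^[j] f) = B^[j - m] f := by
  have hj : j = m + (j - m) := by omega
  conv_lhs => rw [hj, Function.iterate_add_apply B m (j - m)]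
  exact AB_pow hBmaps h1 m (B_iter_mem hBmaps (j - m) hf)

lemma AB_ge (hBmaps : Set.MapsTo B Y Y) (h1 : ∀ f ∈ Y, A (B f) = f)
    {m j : ℕ} (h : j ≤ m) {f : X} (hf : f ∈ Y) :
    A^[m] (B^[j] f) = A^[m - j] f := by
  have hm : m = (m - j) + j := by omega
  conv_lhs => rw [hm, Function.iterate_add_apply A (m - j) j, AB_pow hBmaps h1 j hf]

lemma Y_sub_D (hYsub : Y ⊆ opCinf A (D : Set X)) {f : X} (hf : f ∈ Y) :
    f ∈ (D : Set X) := hYsub hf 0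

lemma B_iter_opCinf (hYsub : Y ⊆ opCinf A (D : Set X))
    (hBmaps : Set.MapsTo B Y Y) (h1 : ∀ f ∈ Y, A (B f) = f)
    (j : ℕ) {f : X} (hf : f ∈ Y) : B^[j] f ∈ opCinf A (D : Set X) := by
  intro k
  rcases le_or_gt k j with h | h
  · rw [AB_le hBmaps h1 h hf]
    exact Y_sub_D hYsub (B_iter_mem hBmaps (j - k) hf)
  · rw [AB_ge hBmaps h1 (le_of_lt h) hf]
    exact hYsub hf (k - j)

lemma A_iter_opCinf (hYsub : Y ⊆ opCinf A (D : Set X)) (j : ℕ) {f : X}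
    (hf : f ∈ Y) : A^[j] f ∈ opCinf A (D : Set X) := by
  intro k
  rw [← Function.iterate_add_apply]
  exact hYsub hf (k + j)

end BY

section More
variable {𝕜 X : Type*} [RCLike 𝕜] [NormedAddCommGroup X] [NormedSpace 𝕜 X]
  {D : Submodule 𝕜 X} {A B : X → X} {Y : Set X}

lemma h2_strong (h2 : ∀ f ∈ Y, ∃ α ∈ Set.Ioo (0 : ℝ) 1, ∃ c > 0,
      ∀ n : ℕ, 0 < n → max ‖A^[n] f‖ ‖B^[n] f‖ ≤ c * α ^ n) :
    ∀ f ∈ Y, ∃ α ∈ Set.Ioo (0 : ℝ) 1, ∃ c > 0,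
      ∀ n : ℕ, ‖A^[n] f‖ ≤ c * α ^ n ∧ ‖B^[n] f‖ ≤ c * α ^ n := by
  intro f hf
  obtain ⟨α, hα, c, hc, hb⟩ := h2 f hf
  refine ⟨α, hα, max c ‖f‖, lt_of_lt_of_le hc (le_max_left _ _), ?_⟩
  intro k
  rcases Nat.eq_zero_or_pos k with rfl | hk
  · simp [le_max_right c ‖f‖]
  · have h1 := (max_le_iff.1 (hb k hk)).1
    have h2' := (max_le_iff.1 (hb k hk)).2
    have hmul : c * α ^ k ≤ max c ‖f‖ * α ^ k := by
      apply mul_le_mul_of_nonneg_right (le_max_left _ _) (le_of_lt (pow_pos hα.1 k))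
    exact ⟨le_trans h1 hmul, le_trans h2' hmul⟩

lemma iterate_pow_apply (A : X → X) (n k : ℕ) (x : X) :
    (A^[n])^[k] x = A^[n * k] x := by
  rw [Function.iterate_mul]

lemma opDom_pow_iff (n m : ℕ) (hn : 0 < n) {x : X} :
    x ∈ opDom (A^[n]) (opDom A (D : Set X) n) m ↔
      x ∈ opDom A (D : Set X) (n * m) := by
  constructor
  · intro h i hi
    have hk : i / n < m := (Nat.div_lt_iff_lt_mul hn).2 (by nlinarith)
    have := h (i / n) hk (i % n) (Nat.mod_lt _ hn)
    rwa [iterate_pow_apply, ← Function.iterate_add_apply,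
      Nat.add_comm, Nat.div_add_mod] at this
  · intro h k hk j hj
    rw [iterate_pow_apply, ← Function.iterate_add_apply]
    exact h (j + n * k) (by nlinarith)

lemma opCinf_pow (n : ℕ) {x : X} (hx : x ∈ opCinf A (D : Set X)) :
    x ∈ opCinf (A^[n]) (opDom A (D : Set X) n) := by
  intro k j hj
  rw [iterate_pow_apply, ← Function.iterate_add_apply]
  exact hx _

lemma summable_geom_bound {r : ℝ} (hr0 : 0 ≤ r) (hr1 : r < 1) (C : ℝ)
    {u : ℕ → X} [CompleteSpace X] (h : ∀ k, ‖u k‖ ≤ C * r ^ k) : Summable u :=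
  Summable.of_norm (Summable.of_nonneg_of_le (fun k => norm_nonneg _) h
    ((summable_geometric_of_lt_one hr0 hr1).mul_left C))

end More

section Periodic
variable {𝕜 X : Type*} [RCLike 𝕜] [NormedAddCommGroup X] [NormedSpace 𝕜 X]
  [CompleteSpace X] {D : Submodule 𝕜 X} {A B : X → X} {Y : Set X}

set_option maxHeartbeats 2000000 in
lemma periodic_dense
    (hlin : IsLinearOn 𝕜 A (D : Set X))
    (hcl : ∀ n : ℕ, 0 < n → ClosedPower A (D : Set X) n)
    (hYsub : Y ⊆ opCinf A (D : Set X)) (hYdense : Dense Y)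
    (hBmaps : Set.MapsTo B Y Y)
    (h1 : ∀ f ∈ Y, A (B f) = f)
    (h2 : ∀ f ∈ Y, ∃ α ∈ Set.Ioo (0 : ℝ) 1, ∃ c > 0,
      ∀ k : ℕ, ‖A^[k] f‖ ≤ c * α ^ k ∧ ‖B^[k] f‖ ≤ c * α ^ k)
    (n : ℕ) (hn : 0 < n) :
    Dense {f | PeriodicPt (A^[n]) (opDom A (D : Set X) n) f} := by
  rw [Metric.dense_iff]
  intro x ε hε
  -- find y ∈ Y close to x
  obtain ⟨y, hyball, hyY⟩ := (Metric.dense_iff.1 hYdense) x (ε/2) (by linarith)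
  obtain ⟨α, hα, c, hc, hb⟩ := h2 y hyY
  have hα0 := hα.1
  have hα1 := hα.2
  -- choose m with tail small
  have htend : Tendsto (fun m : ℕ => (2*c/(1-α)) * (α^n)^m) atTop (𝓝 0) := by
    have := (tendsto_pow_atTop_nhds_zero_of_lt_one (le_of_lt (pow_pos hα0 n))
      (pow_lt_one₀ (le_of_lt hα0) hα1 hn.ne')).const_mul (2*c/(1-α))
    simpa using this
  have hev : ∀ᶠ m : ℕ in atTop, (2*c/(1-α)) * (α^n)^m < ε/2 :=
    Filter.Tendsto.eventually_lt_const (by linarith : (0:ℝ) < ε/2) htend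
  obtain ⟨m, hm1, hmε⟩ : ∃ m : ℕ, 0 < m ∧ (2*c/(1-α)) * (α^n)^m < ε/2 := by
    obtain ⟨m, hm⟩ := (hev.and (eventually_gt_atTop 0)).exists
    exact ⟨m, hm.2, hm.1⟩
  set N := n * m with hNdef
  have hN1 : 0 < N := Nat.mul_pos hn hm1
  set r : ℝ := α ^ N with hrdef
  have hr0 : (0:ℝ) ≤ r := le_of_lt (pow_pos hα0 N)
  have hr1 : r < 1 := pow_lt_one₀ (le_of_lt hα0) hα1 hN1.ne'
  have hrα : r ≤ α := by
    calc r = α ^ N := rfl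
    _ ≤ α ^ 1 := pow_le_pow_of_le_one (le_of_lt hα0) (le_of_lt hα1) hN1
    _ = α := pow_one α
  -- the defining sequence
  set v : X → ℕ → X := fun y0 k => if k = 0 then y0 else A^[N*k] y0 + B^[N*k] y0 with hvdef
  have hv0 : v y 0 = y := rfl
  have hvs : ∀ k : ℕ, v y (k+1) = A^[N*(k+1)] y + B^[N*(k+1)] y := fun k => rfl
  have hmemA : ∀ j : ℕ, A^[j] y ∈ opDom A (D : Set X) N :=
    fun j => opCinf_subset_opDom N (A_iter_opCinf hYsub j hyY)
  have hmemB : ∀ j : ℕ, B^[j] y ∈ opDom A (D : Set X) N :=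
    fun j => opCinf_subset_opDom N (B_iter_opCinf hYsub hBmaps h1 j hyY)
  have hvmem : ∀ k, v y k ∈ opDom A (D : Set X) N := by
    intro k
    rcases k with _ | k
    · exact opCinf_subset_opDom N (hYsub hyY)
    · rw [hvs k]
      exact opDom_add hlin N (hmemA _) (hmemB _)
  -- norms: α ^ (N * j) = r ^ j
  have hpow : ∀ j : ℕ, α ^ (N * j) = r ^ j := fun j => by
    rw [hrdef, ← pow_mul]
  have hbA : ∀ j : ℕ, ‖A^[N*j] y‖ ≤ c * r ^ j := fun j => by
    have := (hb (N*j)).1; rwa [hpow j] at this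
  have hbB : ∀ j : ℕ, ‖B^[N*j] y‖ ≤ c * r ^ j := fun j => by
    have := (hb (N*j)).2; rwa [hpow j] at this
  have hby : ‖y‖ ≤ c := by simpa using (hb 0).2
  have hnv : ∀ k, ‖v y k‖ ≤ (2*c) * r ^ k := by
    intro k
    rcases k with _ | k
    · simpa [hv0] using by nlinarith [hby, hc.le]
    · rw [hvs k]
      calc ‖A^[N*(k+1)] y + B^[N*(k+1)] y‖ ≤ ‖A^[N*(k+1)] y‖ + ‖B^[N*(k+1)] y‖ :=
            norm_add_le _ _
      _ ≤ c * r ^ (k+1) + c * r ^ (k+1) := add_le_add (hbA _) (hbB _)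
      _ = (2*c) * r ^ (k+1) := by ring
  have hsv : Summable (v y) := summable_geom_bound hr0 hr1 (2*c) hnv
  -- action of A^[N]
  have hAv0 : A^[N] (v y 0) = A^[N*1] y := by rw [hv0, Nat.mul_one]
  have hAvs : ∀ k : ℕ, A^[N] (v y (k+1)) = A^[N*(k+2)] y + B^[N*k] y := by
    intro k
    rw [hvs k, iter_add hlin N (hmemA _) (hmemB _) N le_rfl,
      ← Function.iterate_add_apply, AB_le hBmaps h1
        (Nat.le_mul_of_pos_right N (Nat.succ_pos k)) hyY]
    congr 1
    · congr 1; ring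
    · congr 1; rw [Nat.mul_succ, Nat.add_sub_cancel]
  have hsAv : Summable (fun k => A^[N] (v y k)) := by
    rw [← summable_nat_add_iff 1]
    apply summable_geom_bound hr0 hr1 (2*c)
    intro k
    rw [hAvs k]
    have h1' : ‖A^[N*(k+2)] y‖ ≤ c * r ^ k := by
      refine le_trans (hbA (k+2)) ?_
      have : r ^ (k+2) ≤ r ^ k := pow_le_pow_of_le_one hr0 (le_of_lt hr1) (by omega)
      nlinarith
    have h2' : ‖B^[N*k] y‖ ≤ c * r ^ k := hbB k
    calc ‖A^[N*(k+2)] y + B^[N*k] y‖ ≤ ‖A^[N*(k+2)] y‖ + ‖B^[N*k] y‖ := norm_add_le _ _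
    _ ≤ c * r ^ k + c * r ^ k := add_le_add h1' h2'
    _ = (2*c) * r ^ k := by ring
  -- pass A^[N] through the sum
  set g : X := ∑' k, v y k with hgdef
  obtain ⟨hgmem, hgA⟩ := opDom_tsum hlin (hcl N hN1) (v y) hvmem hsv hsAv
  -- component summabilities
  have sA1 : Summable (fun k : ℕ => A^[N*(k+1)] y) := by
    apply summable_geom_bound hr0 hr1 c
    intro k
    refine le_trans (hbA (k+1)) ?_
    have : r ^ (k+1) ≤ r ^ k := pow_le_pow_of_le_one hr0 (le_of_lt hr1) (by omega)
    nlinarith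
  have sB1 : Summable (fun k : ℕ => B^[N*(k+1)] y) := by
    apply summable_geom_bound hr0 hr1 c
    intro k
    refine le_trans (hbB (k+1)) ?_
    have : r ^ (k+1) ≤ r ^ k := pow_le_pow_of_le_one hr0 (le_of_lt hr1) (by omega)
    nlinarith
  have sA2 : Summable (fun k : ℕ => A^[N*(k+2)] y) := (summable_nat_add_iff 1).2 sA1
  have sB0 : Summable (fun k : ℕ => B^[N*k] y) := summable_geom_bound hr0 hr1 c hbB
  -- identities between the sums
  have hA1 : ∑' k : ℕ, A^[N*(k+1)] y = A^[N*1] y + ∑' k : ℕ, A^[N*(k+2)] y := by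
    simpa using Summable.tsum_eq_zero_add sA1
  have hB0 : ∑' k : ℕ, B^[N*k] y = y + ∑' k : ℕ, B^[N*(k+1)] y := by
    simpa using Summable.tsum_eq_zero_add sB0
  have hgy : g = y + ((∑' k : ℕ, A^[N*(k+1)] y) + ∑' k : ℕ, B^[N*(k+1)] y) := by
    rw [hgdef, Summable.tsum_eq_zero_add hsv, hv0]
    congr 1
    rw [← Summable.tsum_add sA1 sB1]
    exact tsum_congr fun k => hvs k
  have hAgg : A^[N] g = g := by
    rw [hgA, Summable.tsum_eq_zero_add hsAv, hAv0]
    have : ∑' k : ℕ, A^[N] (v y (k+1)) =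
        (∑' k : ℕ, A^[N*(k+2)] y) + ∑' k : ℕ, B^[N*k] y := by
      rw [← Summable.tsum_add sA2 sB0]
      exact tsum_congr fun k => hAvs k
    rw [this, hB0, hgy]
    have hA1' : ∑' k : ℕ, A^[N*(k+2)] y = (∑' k : ℕ, A^[N*(k+1)] y) - A^[N*1] y := by
      rw [hA1]; abel
    rw [hA1']
    abel
  -- distance estimate
  have hdist : dist g y < ε/2 := by
    have hgysub : g - y = ∑' k : ℕ, v y (k+1) := by
      rw [hgdef, Summable.tsum_eq_zero_add hsv, hv0]; abel
    have hnorm : ‖∑' k : ℕ, v y (k+1)‖ ≤ (2*c*r) * (1 - r)⁻¹ := by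
      apply tsum_of_norm_bounded ((hasSum_geometric_of_lt_one hr0 hr1).mul_left (2*c*r))
      intro k
      calc ‖v y (k+1)‖ ≤ (2*c) * r ^ (k+1) := hnv (k+1)
      _ = (2*c*r) * r ^ k := by ring
    have hle : (2*c*r) * (1 - r)⁻¹ ≤ (2*c/(1-α)) * (α^n)^m := by
      have hrnm : (α^n)^m = r := by rw [hrdef, ← pow_mul]
      rw [hrnm]
      have h1r : (0:ℝ) < 1 - r := by linarith
      have h1α : (0:ℝ) < 1 - α := by linarith
      have : (1 - r)⁻¹ ≤ (1 - α)⁻¹ := by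
        apply inv_anti₀ h1α
        linarith
      calc (2*c*r) * (1 - r)⁻¹ ≤ (2*c*r) * (1 - α)⁻¹ := by
            apply mul_le_mul_of_nonneg_left this (by positivity)
      _ = (2*c/(1-α)) * r := by rw [div_eq_mul_inv]; ring
    rw [dist_eq_norm, hgysub]
    exact lt_of_le_of_lt (le_trans hnorm hle) hmε
  refine ⟨g, ?_, ?_⟩
  · rw [Metric.mem_ball]
    calc dist g x ≤ dist g y + dist y x := dist_triangle _ _ _
    _ < ε/2 + ε/2 := by
        exact add_lt_add hdist (Metric.mem_ball.1 hyball)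
    _ = ε := by ring
  · exact ⟨m, hm1, (opDom_pow_iff n m hn).2 hgmem,
      by rw [iterate_pow_apply]; exact hAgg⟩

end Periodic

section Hyper
variable {𝕜 X : Type*} [RCLike 𝕜] [NormedAddCommGroup X] [NormedSpace 𝕜 X]
  [CompleteSpace X] [SeparableSpace X] {D : Submodule 𝕜 X} {A B : X → X} {Y : Set X}

set_option maxHeartbeats 2000000 in
lemma hypercyclic_ex
    (hinfdim : ¬ FiniteDimensional 𝕜 X)
    (hlin : IsLinearOn 𝕜 A (D : Set X))
    (hcl : ∀ n : ℕ, 0 < n → ClosedPower A (D : Set X) n)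
    (hYsub : Y ⊆ opCinf A (D : Set X)) (hYdense : Dense Y)
    (hBmaps : Set.MapsTo B Y Y)
    (h1 : ∀ f ∈ Y, A (B f) = f)
    (h2 : ∀ f ∈ Y, ∃ α ∈ Set.Ioo (0 : ℝ) 1, ∃ c > 0,
      ∀ k : ℕ, ‖A^[k] f‖ ≤ c * α ^ k ∧ ‖B^[k] f‖ ≤ c * α ^ k)
    (n : ℕ) (hn : 0 < n) :
    HypercyclicOp (A^[n]) (opDom A (D : Set X) n) := by
  -- a dense sequence in Y repeating each value infinitely often
  haveI : SecondCountableTopology X := UniformSpace.secondCountable_of_separable X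
  obtain ⟨t, htY, htc, htd⟩ := hYdense.exists_countable_dense_subset
  have htne : t.Nonempty := htd.nonempty
  obtain ⟨y0, hy0⟩ := htc.exists_eq_range htne
  set z : ℕ → X := fun k => y0 (Nat.unpair k).1 with hzdef
  have hzY : ∀ k, z k ∈ Y := fun k => htY (hy0 ▸ Set.mem_range_self _)
  have hzdense : ∀ (x : X) (ε : ℝ), 0 < ε → ∀ K : ℕ, ∃ k ≥ K, dist (z k) x < ε := by
    intro x ε hε K
    obtain ⟨w, hwt, hwd⟩ := Metric.mem_closure_iff.1 (htd x) ε hε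
    rw [hy0] at hwt
    obtain ⟨j, rfl⟩ := hwt
    refine ⟨Nat.pair j K, Nat.right_le_pair j K, ?_⟩
    have : z (Nat.pair j K) = y0 j := by rw [hzdef]; simp [Nat.unpair_pair]
    rw [this, dist_comm]
    exact hwd
  -- constants
  choose αs hαs cs hcs hbs using fun k => h2 (z k) (hzY k)
  -- gaps
  have hgap : ∀ k : ℕ, ∃ gk : ℕ, 0 < gk ∧ n ∣ gk ∧
      ∑ j ∈ Finset.range (k+1), cs j * αs j ^ gk ≤ (2:ℝ)⁻¹ ^ k := by
    intro k
    have hto : Tendsto (fun g : ℕ => ∑ j ∈ Finset.range (k+1), cs j * αs j ^ g)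
        atTop (𝓝 0) := by
      have := tendsto_finset_sum (f := fun (j : ℕ) (g : ℕ) => cs j * αs j ^ g)
        (Finset.range (k+1)) (fun j _ =>
          ((tendsto_pow_atTop_nhds_zero_of_lt_one (hαs j).1.le (hαs j).2).const_mul (cs j)))
      simpa using this
    obtain ⟨g0, hg0⟩ := Filter.eventually_atTop.1
      (Filter.Tendsto.eventually_lt_const (by positivity : (0:ℝ) < (2:ℝ)⁻¹ ^ k) hto)
    refine ⟨n * (g0+1), Nat.mul_pos hn (Nat.succ_pos _), ⟨g0+1, rfl⟩, (hg0 _ ?_).le⟩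
    calc g0 ≤ g0 + 1 := Nat.le_succ _
    _ ≤ n * (g0+1) := Nat.le_mul_of_pos_left _ hn
  choose gp hgp0 hgpd hgps using hgap
  -- the lacunary sequence
  set N : ℕ → ℕ := fun k => ∑ j ∈ Finset.range (k+1), gp j with hNdef
  have hstep : ∀ k, N (k+1) = N k + gp (k+1) := fun k => Finset.sum_range_succ gp (k+1)
  have hmono : Monotone N := monotone_nat_of_le_succ fun k => by rw [hstep]; omega
  have hNge : ∀ k, k + 1 ≤ N k := by
    intro k
    have := Finset.card_nsmul_le_sum (Finset.range (k+1)) gp 1 (fun i _ => hgp0 i)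
    simpa using this
  have hNdvd : ∀ k, n ∣ N k := fun k => Finset.dvd_sum (fun j _ => hgpd j)
  have hNlt : ∀ {j k : ℕ}, j < k → N j + gp k ≤ N k := by
    intro j k hjk
    obtain ⟨k', rfl⟩ : ∃ k', k = k' + 1 := ⟨k - 1, by omega⟩
    have := hmono (Nat.lt_succ_iff.1 hjk)
    rw [hstep]; omega
  have hgN : ∀ k, gp k ≤ N k := by
    intro k
    rcases Nat.eq_zero_or_pos k with rfl | hk
    · simp [hNdef]
    · have := hNlt (Nat.lt_of_lt_of_le hk le_rfl)
      omega
  -- the candidate hypercyclic vector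
  set u : ℕ → X := fun k => B^[N k] (z k) with hudef
  have humem : ∀ k, u k ∈ opCinf A (D : Set X) :=
    fun k => B_iter_opCinf hYsub hBmaps h1 (N k) (hzY k)
  have hterm : ∀ j k, j ≤ k → cs j * αs j ^ gp k ≤ (2:ℝ)⁻¹ ^ k := by
    intro j k hjk
    refine le_trans ?_ (hgps k)
    exact Finset.single_le_sum (f := fun j => cs j * αs j ^ gp k)
      (fun i _ => mul_nonneg (hcs i).le (pow_nonneg (hαs i).1.le _))
      (Finset.mem_range.2 (by omega))
  have hcspow : ∀ j (e e' : ℕ), e' ≤ e → cs j * αs j ^ e ≤ cs j * αs j ^ e' := by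
    intro j e e' he
    have := pow_le_pow_of_le_one (hαs j).1.le (hαs j).2.le he
    nlinarith [hcs j]
  have hbu : ∀ k, ‖u k‖ ≤ (2:ℝ)⁻¹ ^ k := by
    intro k
    calc ‖u k‖ ≤ cs k * αs k ^ N k := (hbs k (N k)).2
    _ ≤ cs k * αs k ^ gp k := hcspow k _ _ (hgN k)
    _ ≤ (2:ℝ)⁻¹ ^ k := hterm k k le_rfl
  have hsu : Summable u := summable_geom_bound (by norm_num) (by norm_num : (2:ℝ)⁻¹ < 1) 1
    (fun k => by simpa using hbu k)
  -- tail bound for `A^[m] ∘ u`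
  have hAtail : ∀ m k : ℕ, m ≤ N k → gp k + m ≤ N k →
      ‖A^[m] (u k)‖ ≤ (2:ℝ)⁻¹ ^ k := by
    intro m k hm hgk
    rw [hudef]
    simp only
    rw [AB_le hBmaps h1 hm (hzY k)]
    calc ‖B^[N k - m] (z k)‖ ≤ cs k * αs k ^ (N k - m) := (hbs k _).2
    _ ≤ cs k * αs k ^ gp k := hcspow k _ _ (by omega)
    _ ≤ (2:ℝ)⁻¹ ^ k := hterm k k le_rfl
  have hNbig : ∀ m k : ℕ, m + 1 ≤ k → gp k + m ≤ N k := by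
    intro m k hk
    obtain ⟨k', rfl⟩ : ∃ k', k = k' + 1 := ⟨k - 1, by omega⟩
    have h1' := hNlt (Nat.lt_succ_self k')
    have h2' := hNge k'
    simp only [Nat.succ_eq_add_one] at h1' h2' ⊢
    omega
  have hsAu : ∀ m : ℕ, Summable (fun k => A^[m] (u k)) := by
    intro m
    rw [← summable_nat_add_iff (m+1)]
    apply summable_geom_bound (by norm_num) (by norm_num : (2:ℝ)⁻¹ < 1) 1
    intro k
    have hk : m + 1 ≤ k + (m+1) := by omega
    have hb := hAtail m (k + (m+1)) (by have := hNbig m (k+(m+1)) hk; omega) (hNbig m _ hk)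
    calc ‖A^[m] (u (k + (m+1)))‖ ≤ (2:ℝ)⁻¹ ^ (k + (m+1)) := hb
    _ ≤ 1 * (2:ℝ)⁻¹ ^ k := by
        rw [one_mul]
        exact pow_le_pow_of_le_one (by norm_num) (by norm_num) (by omega)
  set f : X := ∑' k, u k with hfdef
  have hfdom : ∀ m : ℕ, 0 < m → f ∈ opDom A (D : Set X) m ∧
      A^[m] f = ∑' k, A^[m] (u k) := fun m hm =>
    opDom_tsum hlin (hcl m hm) u (fun k => opCinf_subset_opDom m (humem k)) hsu (hsAu m)
  have hfcinf : f ∈ opCinf A (D : Set X) := by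
    intro k
    exact (hfdom (k+1) (Nat.succ_pos k)).1 k (Nat.lt_succ_self k)
  -- the orbit estimate
  have horbit : ∀ i : ℕ, ‖A^[N i] f - z i‖ ≤ (2:ℝ)⁻¹ ^ i + (2:ℝ)⁻¹ ^ i := by
    intro i
    have hNi : 0 < N i := by have := hNge i; omega
    have hAf := (hfdom (N i) hNi).2
    have hsplit := Summable.sum_add_tsum_nat_add (f := fun k => A^[N i] (u k)) (i+1) (hsAu (N i))
    have hwi : A^[N i] (u i) = z i := AB_pow hBmaps h1 (N i) (hzY i)
    have hsum : A^[N i] f - z i = (∑ k ∈ Finset.range i, A^[N i] (u k)) +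
        ∑' k, A^[N i] (u (k + (i+1))) := by
      rw [hAf, ← hsplit, Finset.sum_range_succ, hwi]
      abel
    rw [hsum]
    have hhead : ‖∑ k ∈ Finset.range i, A^[N i] (u k)‖ ≤ (2:ℝ)⁻¹ ^ i := by
      calc ‖∑ k ∈ Finset.range i, A^[N i] (u k)‖
          ≤ ∑ k ∈ Finset.range i, ‖A^[N i] (u k)‖ := norm_sum_le _ _
      _ ≤ ∑ k ∈ Finset.range i, cs k * αs k ^ gp i := by
          apply Finset.sum_le_sum
          intro k hk
          have hki : k < i := Finset.mem_range.1 hk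
          have hNk : N k ≤ N i := hmono hki.le
          rw [hudef]
          simp only
          rw [AB_ge hBmaps h1 hNk (hzY k)]
          calc ‖A^[N i - N k] (z k)‖ ≤ cs k * αs k ^ (N i - N k) := (hbs k _).1
          _ ≤ cs k * αs k ^ gp i := hcspow k _ _ (by have := hNlt hki; omega)
      _ ≤ ∑ j ∈ Finset.range (i+1), cs j * αs j ^ gp i := by
          apply Finset.sum_le_sum_of_subset_of_nonneg
          · exact Finset.range_subset_range.2 (by omega)
          · intro j _ _; exact mul_nonneg (hcs j).le (pow_nonneg (hαs j).1.le _)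
      _ ≤ (2:ℝ)⁻¹ ^ i := hgps i
    have htail : ‖∑' k, A^[N i] (u (k + (i+1)))‖ ≤ (2:ℝ)⁻¹ ^ i := by
      have hb : ∀ k : ℕ, ‖A^[N i] (u (k + (i+1)))‖ ≤ (2:ℝ)⁻¹ ^ (i+1) * (2:ℝ)⁻¹ ^ k := by
        intro k
        have hik : i < k + (i+1) := by omega
        have h1' : N i + gp (k+(i+1)) ≤ N (k+(i+1)) := hNlt hik
        have := hAtail (N i) (k+(i+1)) (by omega) (by omega)
        calc ‖A^[N i] (u (k + (i+1)))‖ ≤ (2:ℝ)⁻¹ ^ (k+(i+1)) := this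
        _ = (2:ℝ)⁻¹ ^ (i+1) * (2:ℝ)⁻¹ ^ k := by rw [← pow_add]; ring_nf
      calc ‖∑' k, A^[N i] (u (k + (i+1)))‖ ≤ (2:ℝ)⁻¹ ^ (i+1) * (1 - (2:ℝ)⁻¹)⁻¹ := by
            apply tsum_of_norm_bounded
              ((hasSum_geometric_of_lt_one (by norm_num) (by norm_num)).mul_left ((2:ℝ)⁻¹ ^ (i+1))) hb
      _ = (2:ℝ)⁻¹ ^ i := by
            rw [pow_succ]
            norm_num
            ring
    calc ‖(∑ k ∈ Finset.range i, A^[N i] (u k)) + ∑' k, A^[N i] (u (k + (i+1)))‖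
        ≤ ‖∑ k ∈ Finset.range i, A^[N i] (u k)‖ + ‖∑' k, A^[N i] (u (k + (i+1)))‖ :=
          norm_add_le _ _
    _ ≤ (2:ℝ)⁻¹ ^ i + (2:ℝ)⁻¹ ^ i := add_le_add hhead htail
  -- dense orbit
  have hdense : Dense (Set.range fun j : ℕ => (A^[n])^[j] f) := by
    rw [Metric.dense_iff]
    intro x ε hε
    obtain ⟨K, hK⟩ := exists_pow_lt_of_lt_one (show (0:ℝ) < ε/4 by linarith)
      (by norm_num : (2:ℝ)⁻¹ < 1)
    obtain ⟨i, hiK, hiz⟩ := hzdense x (ε/2) (by linarith) K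
    refine ⟨(A^[n])^[N i / n] f, ?_, Set.mem_range_self _⟩
    rw [Metric.mem_ball, iterate_pow_apply, Nat.mul_div_cancel' (hNdvd i)]
    have h2i : (2:ℝ)⁻¹ ^ i ≤ (2:ℝ)⁻¹ ^ K :=
      pow_le_pow_of_le_one (by norm_num) (by norm_num) hiK
    calc dist (A^[N i] f) x ≤ dist (A^[N i] f) (z i) + dist (z i) x := dist_triangle _ _ _
    _ ≤ ((2:ℝ)⁻¹ ^ i + (2:ℝ)⁻¹ ^ i) + dist (z i) x := by
        rw [dist_eq_norm]
        exact add_le_add (horbit i) le_rfl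
    _ < (ε/4 + ε/4) + ε/2 := by
        have := lt_of_le_of_lt h2i hK
        exact add_lt_add (add_lt_add this this) hiz
    _ = ε := by ring
  -- nonzero
  have hne : f ≠ 0 := by
    intro hf0
    have hsub : (Set.range fun j : ℕ => (A^[n])^[j] f) ⊆ ({0} : Set X) := by
      rintro - ⟨j, rfl⟩
      show (A^[n])^[j] f ∈ ({0} : Set X)
      rw [iterate_pow_apply, hf0, A_iter_zero hlin]
      rfl
    have hd0 : Dense ({0} : Set X) := hdense.mono hsub
    have : ∀ x : X, x = 0 := by
      intro x
      have := hd0 x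
      rwa [closure_singleton, Set.mem_singleton_iff] at this
    have hss : Subsingleton X := ⟨fun a b => by rw [this a, this b]⟩
    exact hinfdim inferInstance
  exact ⟨f, opCinf_pow n hfcinf, hne, hdense⟩

end Hyper

/-- **Chaoticity of powers.** -/
theorem chaoticity_of_powers
    {𝕜 X : Type*} [RCLike 𝕜] [NormedAddCommGroup X] [NormedSpace 𝕜 X]
    [CompleteSpace X] [SeparableSpace X]
    (hinfdim : ¬ FiniteDimensional 𝕜 X)
    (D : Submodule 𝕜 X) (A : X → X)
    (hlin : IsLinearOn 𝕜 A (D : Set X))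
    (hdd : Dense (D : Set X))
    (hcl : ∀ n : ℕ, 0 < n → ClosedPower A (D : Set X) n)
    (Y : Set X) (hYsub : Y ⊆ opCinf A (D : Set X)) (hYdense : Dense Y)
    (B : X → X) (hBmaps : Set.MapsTo B Y Y)
    (h1 : ∀ f ∈ Y, A (B f) = f)
    (h2 : ∀ f ∈ Y, ∃ α ∈ Set.Ioo (0 : ℝ) 1, ∃ c > 0,
      ∀ n : ℕ, 0 < n → max ‖A^[n] f‖ ‖B^[n] f‖ ≤ c * α ^ n)
    :
    ∀ n : ℕ, 0 < n → ChaoticOp (A^[n]) (opDom A (D : Set X) n) := by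
  intro n hn
  exact ⟨hypercyclic_ex hinfdim hlin hcl hYsub hYdense hBmaps h1 (h2_strong h2) n hn,
    periodic_dense hlin hcl hYsub hYdense hBmaps h1 (h2_strong h2) n hn⟩
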